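/- The class GPVAL is closed under pointwise addition and subtraction: if I ⊆ ℝ^d is open and connected and f : I → ℝ^e and g : I → ℝ^e both belong to GPVAL, then f + g : I → ℝ^e and f − g : I → ℝ^e belong to GPVAL. -/

import Mathlib

noncomputable section

/-- The continuous linear map `ℝ^d → ℝ^n` associated to an `n × d` real matrix. -/
def matLin {n d : ℕ} (M : Matrix (Fin n) (Fin d) ℝ) : (Fin d → ℝ) →L[ℝ] (Fin n → ℝ) :=
  LinearMap.toContinuousLinearMap (Matrix.toLin' M)

/-- The class `GPVAL` of polynomially bounded generable functions on `I`. -/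
def GPVAL {d e : ℕ} (I : Set (Fin d → ℝ)) (f : (Fin d → ℝ) → (Fin e → ℝ)) : Prop :=
  ∃ (sp : Polynomial ℝ) (n : ℕ) (hn : e ≤ n)
    (p : Matrix (Fin n) (Fin d) (MvPolynomial (Fin n) ℝ))
    (x₀ : Fin d → ℝ) (y₀ : Fin n → ℝ) (y : (Fin d → ℝ) → (Fin n → ℝ)),
    (∀ a : ℝ, 0 ≤ a → 0 ≤ sp.eval a) ∧
    x₀ ∈ I ∧ y x₀ = y₀ ∧
    (∀ x ∈ I, HasFDerivAt y (matLin (fun i j => MvPolynomial.eval (y x) (p i j))) x) ∧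
    (∀ x ∈ I, ∀ i : Fin e, f x i = y x (Fin.castLE hn i)) ∧
    (∀ x ∈ I, ‖y x‖ ≤ sp.eval ‖x‖)

theorem gpval_combine {d e : ℕ} (I : Set (Fin d → ℝ)) (c : ℝ) (hc : |c| ≤ 1)
    (f g : (Fin d → ℝ) → (Fin e → ℝ)) (hf : GPVAL I f) (hg : GPVAL I g) :
    GPVAL I (fun x i => f x i + c * g x i) := by
  obtain ⟨spf, n, hnf, pf, x₀, y₀f, yf, hspf, hx₀, -, hdf, hvf, hbf⟩ := hf
  obtain ⟨spg, m, hng, pg, x₁, y₀g, yg, hspg, hx₁, -, hdg, hvg, hbg⟩ := hg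
  let ρf : Fin n → Fin (e + (n + m)) := fun k => Fin.natAdd e (Fin.castAdd m k)
  let ρg : Fin m → Fin (e + (n + m)) := fun k => Fin.natAdd e (Fin.natAdd n k)
  let y' : (Fin d → ℝ) → Fin (e + (n + m)) → ℝ := fun x =>
    Fin.append (fun i : Fin e => yf x (Fin.castLE hnf i) + c * yg x (Fin.castLE hng i))
      (Fin.append (yf x) (yg x))
  have hcompf : ∀ x, (y' x) ∘ ρf = yf x := by
    intro x; funext k; simp [y', ρf, Fin.append_right, Fin.append_left]
  have hcompg : ∀ x, (y' x) ∘ ρg = yg x := by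
    intro x; funext k; simp [y', ρg, Fin.append_right]
  let p' : Matrix (Fin (e + (n + m))) (Fin d) (MvPolynomial (Fin (e + (n + m))) ℝ) := fun i j =>
    Fin.addCases
      (fun i0 => MvPolynomial.rename ρf (pf (Fin.castLE hnf i0) j)
        + MvPolynomial.C c * MvPolynomial.rename ρg (pg (Fin.castLE hng i0) j))
      (Fin.addCases (fun a => MvPolynomial.rename ρf (pf a j))
        (fun b => MvPolynomial.rename ρg (pg b j))) i
  refine ⟨spf + spg, e + (n + m), Nat.le_add_right e (n + m), p', x₀, y' x₀, y', ?_, hx₀, rfl,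
    ?_, ?_, ?_⟩
  · intro a ha
    simp only [Polynomial.eval_add]
    exact add_nonneg (hspf a ha) (hspg a ha)
  · intro x hx
    rw [hasFDerivAt_pi']
    intro i
    refine Fin.addCases (fun i0 => ?_) (fun k => ?_) i
    · have h1 : (fun x => y' x (Fin.castAdd (n + m) i0))
          = fun x => yf x (Fin.castLE hnf i0) + c * yg x (Fin.castLE hng i0) := by
        funext x; simp [y', Fin.append_left]
      have hD : (ContinuousLinearMap.proj (Fin.castAdd (n + m) i0)).comp
            (matLin (fun i j => MvPolynomial.eval (y' x) (p' i j)))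
          = ((ContinuousLinearMap.proj (R := ℝ) (φ := fun _ : Fin n => ℝ)
              (Fin.castLE hnf i0)).comp
              (matLin (fun i j => MvPolynomial.eval (yf x) (pf i j))))
            + c • ((ContinuousLinearMap.proj (R := ℝ) (φ := fun _ : Fin m => ℝ)
              (Fin.castLE hng i0)).comp
              (matLin (fun i j => MvPolynomial.eval (yg x) (pg i j)))) := by
        ext v
        simp only [matLin, LinearMap.coe_toContinuousLinearMap', ContinuousLinearMap.coe_comp', Function.comp_apply, ContinuousLinearMap.add_apply, ContinuousLinearMap.coe_smul', Pi.smul_apply, ContinuousLinearMap.proj_apply]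
        erw [Matrix.toLin'_apply, Matrix.toLin'_apply, Matrix.toLin'_apply]
        simp [matLin, Matrix.mulVec, dotProduct, p', Fin.addCases_left,
          MvPolynomial.eval_rename, hcompf, hcompg, add_mul, Finset.sum_add_distrib,
          Finset.mul_sum, mul_assoc]
      rw [h1, hD]
      exact (hasFDerivAt_pi'.mp (hdf x hx) _).add
        ((hasFDerivAt_pi'.mp (hdg x hx) _).const_mul c)
    · refine Fin.addCases (fun a => ?_) (fun b => ?_) k
      · have h1 : (fun x => y' x (Fin.natAdd e (Fin.castAdd m a))) = fun x => yf x a := by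
          funext x; simp [y', Fin.append_right, Fin.append_left]
        have hD : (ContinuousLinearMap.proj (Fin.natAdd e (Fin.castAdd m a))).comp
              (matLin (fun i j => MvPolynomial.eval (y' x) (p' i j)))
            = (ContinuousLinearMap.proj (R := ℝ) (φ := fun _ : Fin n => ℝ) a).comp
              (matLin (fun i j => MvPolynomial.eval (yf x) (pf i j))) := by
          ext v
          simp only [matLin, LinearMap.coe_toContinuousLinearMap', ContinuousLinearMap.coe_comp', Function.comp_apply, ContinuousLinearMap.add_apply, ContinuousLinearMap.coe_smul', Pi.smul_apply, ContinuousLinearMap.proj_apply]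
          erw [Matrix.toLin'_apply, Matrix.toLin'_apply]
          simp [matLin, Matrix.mulVec, dotProduct, p', Fin.addCases_right, Fin.addCases_left,
            MvPolynomial.eval_rename, hcompf]
        rw [h1, hD]
        exact hasFDerivAt_pi'.mp (hdf x hx) _
      · have h1 : (fun x => y' x (Fin.natAdd e (Fin.natAdd n b))) = fun x => yg x b := by
          funext x; simp [y', Fin.append_right]
        have hD : (ContinuousLinearMap.proj (Fin.natAdd e (Fin.natAdd n b))).comp
              (matLin (fun i j => MvPolynomial.eval (y' x) (p' i j)))
            = (ContinuousLinearMap.proj (R := ℝ) (φ := fun _ : Fin m => ℝ) b).comp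
              (matLin (fun i j => MvPolynomial.eval (yg x) (pg i j))) := by
          ext v
          simp only [matLin, LinearMap.coe_toContinuousLinearMap', ContinuousLinearMap.coe_comp', Function.comp_apply, ContinuousLinearMap.add_apply, ContinuousLinearMap.coe_smul', Pi.smul_apply, ContinuousLinearMap.proj_apply]
          erw [Matrix.toLin'_apply, Matrix.toLin'_apply]
          simp [matLin, Matrix.mulVec, dotProduct, p', Fin.addCases_right,
            MvPolynomial.eval_rename, hcompg]
        rw [h1, hD]
        exact hasFDerivAt_pi'.mp (hdg x hx) _
  · intro x hx i
    have : Fin.castLE (Nat.le_add_right e (n + m)) i = Fin.castAdd (n + m) i := rfl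
    rw [this]
    simp only [y', Fin.append_left]
    rw [hvf x hx i, hvg x hx i]
  · intro x hx
    have h0f : 0 ≤ spf.eval ‖x‖ := hspf _ (norm_nonneg x)
    have h0g : 0 ≤ spg.eval ‖x‖ := hspg _ (norm_nonneg x)
    have h0 : 0 ≤ (spf + spg).eval ‖x‖ := by
      simp only [Polynomial.eval_add]; exact add_nonneg h0f h0g
    rw [pi_norm_le_iff_of_nonneg h0]
    intro i
    simp only [Polynomial.eval_add]
    refine Fin.addCases (fun i0 => ?_) (fun k => ?_) i
    · have : y' x (Fin.castAdd (n + m) i0)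
          = yf x (Fin.castLE hnf i0) + c * yg x (Fin.castLE hng i0) := by
        simp [y', Fin.append_left]
      rw [Real.norm_eq_abs, this]
      calc |yf x (Fin.castLE hnf i0) + c * yg x (Fin.castLE hng i0)|
          ≤ |yf x (Fin.castLE hnf i0)| + |c| * |yg x (Fin.castLE hng i0)| := by
            rw [← abs_mul]; exact abs_add_le _ _
        _ ≤ ‖yf x‖ + 1 * ‖yg x‖ := add_le_add (norm_le_pi_norm (yf x) _)
              (mul_le_mul hc (norm_le_pi_norm (yg x) _) (abs_nonneg _) zero_le_one)
        _ ≤ spf.eval ‖x‖ + spg.eval ‖x‖ := by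
            rw [one_mul]; exact add_le_add (hbf x hx) (hbg x hx)
    · refine Fin.addCases (fun a => ?_) (fun b => ?_) k
      · have : y' x (Fin.natAdd e (Fin.castAdd m a)) = yf x a := by
          simp [y', Fin.append_right, Fin.append_left]
        rw [Real.norm_eq_abs, this]
        calc |yf x a| ≤ ‖yf x‖ := norm_le_pi_norm (yf x) _
          _ ≤ spf.eval ‖x‖ := hbf x hx
          _ ≤ spf.eval ‖x‖ + spg.eval ‖x‖ := le_add_of_nonneg_right h0g
      · have : y' x (Fin.natAdd e (Fin.natAdd n b)) = yg x b := by
          simp [y', Fin.append_right]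
        rw [Real.norm_eq_abs, this]
        calc |yg x b| ≤ ‖yg x‖ := norm_le_pi_norm (yg x) _
          _ ≤ spg.eval ‖x‖ := hbg x hx
          _ ≤ spf.eval ‖x‖ + spg.eval ‖x‖ := le_add_of_nonneg_left h0f

/-- **`GPVAL` is closed under pointwise addition and subtraction.** -/
theorem gpval_add_sub {d e : ℕ} (I : Set (Fin d → ℝ))
    (hIopen : IsOpen I) (hIconn : IsConnected I)
    (f g : (Fin d → ℝ) → (Fin e → ℝ)) (hf : GPVAL I f) (hg : GPVAL I g) :
    GPVAL I (f + g) ∧ GPVAL I (f - g) := by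
  constructor
  · have h := gpval_combine I 1 (by norm_num) f g hf hg
    convert h using 1
    funext x i
    simp [Pi.add_apply]
  · have h := gpval_combine I (-1) (by norm_num) f g hf hg
    convert h using 1
    funext x i
    simp [Pi.sub_apply, sub_eq_add_neg]
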